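/- arXiv:2105.08277 — 4 statements merged into one kernel-verified Lean document; each statement's English description precedes it below -/
import Mathlib

section
/- For the cycle graph on n vertices (n ≥ 3), the Hosoya index equals the n-th Lucas number L_n, where L_0 = 2, L_1 = 1, and L_n = L_{n-1} + L_{n-2}. -/
/-- The Hosoya index of a simple graph: the number of matchings
(sets of pairwise vertex-disjoint edges), including the empty matching. -/
noncomputable def hosoya {V : Type*} [Fintype V] (G : SimpleGraph V) : ℕ :=
  Nat.card {s : Finset (Sym2 V) // (∀ e ∈ s, e ∈ G.edgeSet) ∧
    (s : Set (Sym2 V)).Pairwise fun e f => ∀ v ∈ e, v ∉ f}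

/-- Lucas numbers: L 0 = 2, L 1 = 1, L (n+2) = L (n+1) + L n. -/
def lucas : ℕ → ℕ
  | 0 => 2
  | 1 => 1
  | n + 2 => lucas (n + 1) + lucas n


abbrev Cfg := ℕ → Bool

def bdd (n : ℕ) (f : Cfg) : Prop := ∀ i, f i = true → i < n
def nc (f : Cfg) : Prop := ∀ i, ¬(f i = true ∧ f (i+1) = true)

def pathSet (n : ℕ) : Set Cfg := {f | bdd n f ∧ nc f}
def cycSet (n : ℕ) : Set Cfg := {f | bdd n f ∧ nc f ∧ ¬(f 0 = true ∧ f (n-1) = true)}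
def QSet (n : ℕ) : Set Cfg := {f | bdd n f ∧ nc f ∧ f 0 = false}

lemma bdd_false {n : ℕ} {f : Cfg} (h : bdd n f) {i : ℕ} (hi : n ≤ i) : f i = false := by
  cases hf : f i with
  | false => rfl
  | true => exact absurd (h i hf) (by omega)

lemma finite_bdd (n : ℕ) : {f : Cfg | bdd n f}.Finite := by
  rw [← Set.finite_coe_iff]
  apply Finite.of_injective (fun f : {f : Cfg | bdd n f} => (fun i : Fin n => f.1 i))
  intro f g h
  apply Subtype.ext; funext i
  by_cases hi : i < n
  · exact congrFun h ⟨i, hi⟩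
  · rw [bdd_false f.2 (by omega), bdd_false g.2 (by omega)]

lemma pathSet_finite (n : ℕ) : (pathSet n).Finite :=
  (finite_bdd n).subset fun f hf => hf.1
lemma cycSet_finite (n : ℕ) : (cycSet n).Finite :=
  (finite_bdd n).subset fun f hf => hf.1
lemma QSet_finite (n : ℕ) : (QSet n).Finite :=
  (finite_bdd n).subset fun f hf => hf.1

lemma ncard_split {α : Type*} (s : Set α) (hs : s.Finite) (p : α → Prop) :
    s.ncard = {x | x ∈ s ∧ p x}.ncard + {x | x ∈ s ∧ ¬ p x}.ncard := by
  have h1 : {x | x ∈ s ∧ p x}.Finite := hs.subset fun x hx => hx.1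
  have h2 : {x | x ∈ s ∧ ¬ p x}.Finite := hs.subset fun x hx => hx.1
  have hd : Disjoint {x | x ∈ s ∧ p x} {x | x ∈ s ∧ ¬ p x} := by
    rw [Set.disjoint_left]; rintro x ⟨-, hp⟩ ⟨-, hnp⟩; exact hnp hp
  rw [← Set.ncard_union_eq hd h1 h2]
  congr 1; ext x
  constructor
  · intro hx; by_cases hp : p x
    · exact Or.inl ⟨hx, hp⟩
    · exact Or.inr ⟨hx, hp⟩
  · rintro (⟨hx, -⟩ | ⟨hx, -⟩) <;> exact hx

lemma nc_mono {f g : Cfg} (h : ∀ i, g i = true → f i = true) (hf : nc f) : nc g :=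
  fun i hi => hf i ⟨h _ hi.1, h _ hi.2⟩

lemma P0 : (pathSet 0).ncard = 1 := by
  have : pathSet 0 = {fun _ => false} := by
    ext f
    constructor
    · rintro ⟨hb, -⟩
      funext i
      exact bdd_false hb (by omega)
    · rintro rfl
      exact ⟨fun i hi => by simp at hi, fun i hi => by simp at hi⟩
  rw [this, Set.ncard_singleton]

lemma P1 : (pathSet 1).ncard = 2 := by
  have : pathSet 1 = {fun _ => false, fun i => decide (i = 0)} := by
    ext f
    constructor
    · rintro ⟨hb, -⟩
      by_cases h0 : f 0 = true
      · right
        funext i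
        cases i with
        | zero => simp [h0]
        | succ j => simp [bdd_false hb (i := j+1) (by omega)]
      · left
        funext i
        cases i with
        | zero => simpa using h0
        | succ j => exact bdd_false hb (by omega)
    · rintro (rfl | rfl)
      · exact ⟨fun i hi => by simp at hi, fun i hi => by simp at hi⟩
      · refine ⟨fun i hi => ?_, fun i hi => ?_⟩
        · simp at hi; omega
        · simp at hi
  rw [this, Set.ncard_pair]
  intro h
  have := congrFun h 0
  simp at this

lemma Prec (n : ℕ) : (pathSet (n+2)).ncard = (pathSet (n+1)).ncard + (pathSet n).ncard := by
  rw [ncard_split (pathSet (n+2)) (pathSet_finite _) (fun f => f (n+1) = false)]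
  congr 1
  · congr 1
    ext f
    constructor
    · rintro ⟨⟨hb, hnc⟩, hl⟩
      refine ⟨fun i hi => ?_, hnc⟩
      have := hb i hi
      rcases Nat.lt_or_ge i (n+1) with h | h
      · exact h
      · have : i = n+1 := by omega
        rw [this] at hi; rw [hl] at hi; simp at hi
    · rintro ⟨hb, hnc⟩
      exact ⟨⟨fun i hi => by have := hb i hi; omega, hnc⟩, bdd_false hb (by omega)⟩
  · have himg : {x | x ∈ pathSet (n+2) ∧ ¬ x (n+1) = false}
        = (fun g => Function.update g (n+1) true) '' pathSet n := by
      ext f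
      constructor
      · rintro ⟨⟨hb, hnc⟩, hl⟩
        have hl' : f (n+1) = true := by
          cases h : f (n+1) with
          | false => exact absurd h hl
          | true => rfl
        refine ⟨Function.update f (n+1) false, ⟨?_, ?_⟩, ?_⟩
        · intro i hi
          have hine : i ≠ n+1 := by
            intro h; rw [h, Function.update_self] at hi; simp at hi
          rw [Function.update_of_ne hine] at hi
          have h1 := hb i hi
          have hn : f n = false := by
            cases h : f n
            · rfl
            · exact absurd ⟨h, hl'⟩ (hnc n)
          have : i ≠ n := by intro h; rw [h, hn] at hi; simp at hi
          omega
        · refine nc_mono (fun i hi => ?_) hnc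
          by_cases h : i = n+1
          · rw [h, Function.update_self] at hi; simp at hi
          · rwa [Function.update_of_ne h] at hi
        · show Function.update (Function.update f (n+1) false) (n+1) true = f
          funext i
          by_cases h : i = n+1
          · rw [h, Function.update_self, hl']
          · rw [Function.update_of_ne h, Function.update_of_ne h]
      · rintro ⟨g, ⟨hb, hnc⟩, rfl⟩
        show Function.update g (n+1) true ∈ {x | x ∈ pathSet (n+2) ∧ ¬ x (n+1) = false}
        refine ⟨⟨?_, ?_⟩, by simp⟩
        · intro i hi
          by_cases h : i = n+1
          · omega
          · rw [Function.update_of_ne h] at hi; have := hb i hi; omega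
        · intro i ⟨h1, h2⟩
          by_cases hA : i = n+1
          · rw [hA] at h2
            rw [Function.update_of_ne (by omega)] at h2
            rw [bdd_false hb (by omega)] at h2; simp at h2
          · by_cases hB : i = n
            · rw [hB, Function.update_of_ne (by omega)] at h1
              rw [bdd_false hb (by omega)] at h1; simp at h1
            · rw [Function.update_of_ne hA] at h1
              rw [Function.update_of_ne (by omega)] at h2
              exact hnc i ⟨h1, h2⟩
    rw [himg, Set.ncard_image_of_injOn]
    intro g1 hg1 g2 hg2 h
    funext i
    by_cases hi : i = n+1
    · rw [hi, bdd_false hg1.1 (by omega), bdd_false hg2.1 (by omega)]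
    · have h' : Function.update g1 (n+1) true = Function.update g2 (n+1) true := h
      have := congrFun h' i
      rwa [Function.update_of_ne hi, Function.update_of_ne hi] at this

lemma Qcard (k : ℕ) : (QSet (k+1)).ncard = (pathSet k).ncard := by
  have himg : QSet (k+1) = (fun g => fun i => match i with
      | 0 => false
      | Nat.succ j => g j) '' pathSet k := by
    ext f
    constructor
    · rintro ⟨hb, hnc, h0⟩
      refine ⟨fun j => f (j+1), ⟨fun j hj => by have := hb (j+1) hj; omega,
        fun j hj => hnc (j+1) hj⟩, ?_⟩
      funext i
      cases i with
      | zero => exact h0.symm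
      | succ j => rfl
    · rintro ⟨g, ⟨hb, hnc⟩, rfl⟩
      show (fun i => match i with | 0 => false | Nat.succ j => g j) ∈ QSet (k+1)
      refine ⟨?_, ?_, rfl⟩
      · intro i hi
        cases i with
        | zero => simp at hi
        | succ j => simp only at hi; have := hb j hi; omega
      · intro i hi
        cases i with
        | zero => simp at hi
        | succ j => exact hnc j hi
  rw [himg, Set.ncard_image_of_injOn]
  intro g1 _ g2 _ h
  funext j
  exact congrFun h (j+1)

lemma Crec (m : ℕ) :
    (cycSet (m+3)).ncard = (pathSet (m+2)).ncard + (pathSet m).ncard := by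
  rw [ncard_split (cycSet (m+3)) (cycSet_finite _) (fun f => f (m+2) = false)]
  congr 1
  · congr 1
    ext f
    constructor
    · rintro ⟨⟨hb, hnc, hw⟩, hl⟩
      refine ⟨fun i hi => ?_, hnc⟩
      have h1 := hb i hi
      have h2 : i ≠ m+2 := by intro h; rw [h, hl] at hi; simp at hi
      omega
    · rintro ⟨hb, hnc⟩
      refine ⟨⟨fun i hi => by have := hb i hi; omega, hnc, ?_⟩, bdd_false hb (by omega)⟩
      show ¬(f 0 = true ∧ f (m+3-1) = true)
      rw [show m+3-1 = m+2 from rfl, bdd_false hb (by omega : m+2 ≤ m+2)]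
      simp
  · have himg : {x | x ∈ cycSet (m+3) ∧ ¬ x (m+2) = false}
        = (fun g => Function.update g (m+2) true) '' QSet (m+1) := by
      ext f
      constructor
      · rintro ⟨⟨hb, hnc, hw⟩, hl⟩
        have hl' : f (m+2) = true := by
          cases h : f (m+2) with
          | false => exact absurd h hl
          | true => rfl
        have h0 : f 0 = false := by
          cases h : f 0 with
          | false => rfl
          | true =>
            exact absurd ⟨h, by rw [show m+3-1 = m+2 from rfl]; exact hl'⟩ hw
        refine ⟨Function.update f (m+2) false, ⟨?_, ?_, ?_⟩, ?_⟩
        · intro i hi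
          have hine : i ≠ m+2 := by
            intro h; rw [h, Function.update_self] at hi; simp at hi
          rw [Function.update_of_ne hine] at hi
          have h1 := hb i hi
          have hm1 : f (m+1) = false := by
            cases h : f (m+1) with
            | false => rfl
            | true => exact absurd ⟨h, hl'⟩ (hnc (m+1))
          have : i ≠ m+1 := by intro h; rw [h, hm1] at hi; simp at hi
          omega
        · refine nc_mono (fun i hi => ?_) hnc
          by_cases h : i = m+2
          · rw [h, Function.update_self] at hi; simp at hi
          · rwa [Function.update_of_ne h] at hi
        · rw [Function.update_of_ne (by omega : (0:ℕ) ≠ m+2)]; exact h0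
        · show Function.update (Function.update f (m+2) false) (m+2) true = f
          funext i
          by_cases h : i = m+2
          · rw [h, Function.update_self, hl']
          · rw [Function.update_of_ne h, Function.update_of_ne h]
      · rintro ⟨g, ⟨hb, hnc, h0⟩, rfl⟩
        show Function.update g (m+2) true ∈ {x | x ∈ cycSet (m+3) ∧ ¬ x (m+2) = false}
        refine ⟨⟨?_, ?_, ?_⟩, by simp⟩
        · intro i hi
          by_cases h : i = m+2
          · omega
          · rw [Function.update_of_ne h] at hi; have := hb i hi; omega
        · intro i ⟨h1, h2⟩
          by_cases hA : i = m+2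
          · rw [hA] at h2
            rw [Function.update_of_ne (by omega)] at h2
            rw [bdd_false hb (by omega)] at h2; simp at h2
          · by_cases hB : i = m+1
            · rw [hB, Function.update_of_ne (by omega)] at h1
              rw [bdd_false hb (by omega)] at h1; simp at h1
            · rw [Function.update_of_ne hA] at h1
              rw [Function.update_of_ne (by omega)] at h2
              exact hnc i ⟨h1, h2⟩
        · show ¬(Function.update g (m+2) true 0 = true ∧
              Function.update g (m+2) true (m+3-1) = true)
          rw [Function.update_of_ne (by omega : (0:ℕ) ≠ m+2), h0]
          simp
    rw [himg, Set.ncard_image_of_injOn, Qcard m]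
    intro g1 hg1 g2 hg2 h
    funext i
    by_cases hi : i = m+2
    · rw [hi, bdd_false hg1.1 (by omega), bdd_false hg2.1 (by omega)]
    · have h' : Function.update g1 (m+2) true = Function.update g2 (m+2) true := h
      have := congrFun h' i
      rwa [Function.update_of_ne hi, Function.update_of_ne hi] at this

lemma lucas_aux : ∀ k, lucas (k+3) = (pathSet (k+2)).ncard + (pathSet k).ncard ∧
    lucas (k+4) = (pathSet (k+3)).ncard + (pathSet (k+1)).ncard := by
  intro k
  induction k with
  | zero =>
    have h2 : (pathSet 2).ncard = 3 := by rw [Prec 0, P1, P0]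
    have h3 : (pathSet 3).ncard = 5 := by rw [Prec 1, P1, h2]
    constructor
    · show lucas 3 = (pathSet 2).ncard + (pathSet 0).ncard
      rw [h2, P0]; rfl
    · show lucas 4 = (pathSet 3).ncard + (pathSet 1).ncard
      rw [h3, P1]; rfl
  | succ k ih =>
    refine ⟨ih.2, ?_⟩
    have hA : (pathSet (k+4)).ncard = (pathSet (k+3)).ncard + (pathSet (k+2)).ncard :=
      Prec (k+2)
    have hB : (pathSet (k+2)).ncard = (pathSet (k+1)).ncard + (pathSet k).ncard := Prec k
    show lucas (k+5) = (pathSet (k+4)).ncard + (pathSet (k+2)).ncard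
    have hL : lucas (k+5) = lucas (k+4) + lucas (k+3) := rfl
    rw [hL, ih.1, ih.2, hA, hB]
    ring

lemma cyc_lucas (m : ℕ) : (cycSet (m+3)).ncard = lucas (m+3) := by
  rw [Crec m, (lucas_aux m).1]

open SimpleGraph

def Ed (m : ℕ) (i : Fin (m+3)) : Sym2 (Fin (m+3)) := s(i, i+1)

lemma Ed_mem (m : ℕ) (i : Fin (m+3)) : Ed m i ∈ (cycleGraph (m+3)).edgeSet := by
  rw [Ed, mem_edgeSet, cycleGraph_adj]
  right; exact add_sub_cancel_left i 1

lemma Ed_inj (m : ℕ) : Function.Injective (Ed m) := by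
  intro i j h
  rcases Sym2.eq_iff.mp h with ⟨h1, -⟩ | ⟨h1, h2⟩
  · exact h1
  · exfalso
    have hii : i = i + 2 := by
      calc i = j + 1 := h1
        _ = (i + 1) + 1 := by rw [h2]
        _ = i + 2 := by rw [add_assoc]; rfl
    have h20 : (2 : Fin (m+3)) = 0 := left_eq_add.mp hii
    have := congrArg Fin.val h20
    simp [Fin.val_two, Nat.mod_eq_of_lt (show 2 < m+3 by omega)] at this

lemma Ed_vmem (m : ℕ) (i v : Fin (m+3)) : v ∈ Ed m i ↔ v = i ∨ v = i + 1 := Sym2.mem_iff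

def IsM (m : ℕ) (s : Finset (Sym2 (Fin (m+3)))) : Prop :=
  (∀ e ∈ s, e ∈ (cycleGraph (m+3)).edgeSet) ∧
    (s : Set (Sym2 (Fin (m+3)))).Pairwise fun e f => ∀ v ∈ e, v ∉ f

def toCfg (m : ℕ) (s : Finset (Sym2 (Fin (m+3)))) : Cfg :=
  fun k => if h : k < m+3 then decide (Ed m ⟨k, h⟩ ∈ s) else false

lemma toCfg_true {m : ℕ} {s : Finset (Sym2 (Fin (m+3)))} {k : ℕ} :
    toCfg m s k = true ↔ ∃ h : k < m+3, Ed m ⟨k, h⟩ ∈ s := by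
  by_cases h : k < m+3
  · simp [toCfg, h]
  · simp [toCfg, h]

lemma not_both {m : ℕ} {s : Finset (Sym2 (Fin (m+3)))} (hM : IsM m s) {i j : Fin (m+3)}
    (hi : Ed m i ∈ s) (hj : Ed m j ∈ s) (hij : j = i + 1) : False := by
  have hne : Ed m i ≠ Ed m j := by
    intro h
    have hnij := Ed_inj m h
    rw [← hnij] at hij
    have h10 : (1 : Fin (m+3)) = 0 := left_eq_add.mp hij
    have := congrArg Fin.val h10
    simp at this
  have hR := hM.2 (Finset.mem_coe.mpr hi) (Finset.mem_coe.mpr hj) hne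
  exact hR (i+1) ((Ed_vmem m i (i+1)).mpr (Or.inr rfl))
    ((Ed_vmem m j (i+1)).mpr (Or.inl hij.symm))

lemma toCfg_mem {m : ℕ} {s : Finset (Sym2 (Fin (m+3)))} (hM : IsM m s) :
    toCfg m s ∈ cycSet (m+3) := by
  refine ⟨?_, ?_, ?_⟩
  · intro k hk
    by_contra h
    unfold toCfg at hk
    rw [dif_neg h] at hk
    simp at hk
  · intro k ⟨h1, h2⟩
    obtain ⟨hk, he⟩ := toCfg_true.mp h1
    obtain ⟨hk2, he2⟩ := toCfg_true.mp h2
    apply not_both hM he he2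
    have hnl : (⟨k, hk⟩ : Fin (m+3)) ≠ Fin.last (m+2) := by
      intro h
      have := congrArg Fin.val h
      simp [Fin.val_last] at this
      omega
    apply Fin.ext
    simp [Fin.val_add_one, hnl]
  · intro ⟨h1, h2⟩
    obtain ⟨hk, he⟩ := toCfg_true.mp h1
    obtain ⟨hk2, he2⟩ := toCfg_true.mp h2
    apply not_both hM he2 he
    have hlast : (⟨m+3-1, hk2⟩ : Fin (m+3)) = Fin.last (m+2) := by
      apply Fin.ext; simp [Fin.val_last]
    rw [hlast, Fin.last_add_one]
    apply Fin.ext; simp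

lemma edge_repr {m : ℕ} {e : Sym2 (Fin (m+3))} (he : e ∈ (cycleGraph (m+3)).edgeSet) :
    ∃ i, e = Ed m i := by
  induction e using Sym2.ind with
  | _ u v =>
    rw [mem_edgeSet, cycleGraph_adj] at he
    rcases he with h | h
    · have hu : u = v + 1 := by rw [sub_eq_iff_eq_add.mp h]; exact add_comm 1 v
      exact ⟨v, by rw [hu, Ed]; exact Sym2.eq_swap⟩
    · have hv : v = u + 1 := by rw [sub_eq_iff_eq_add.mp h]; exact add_comm 1 u
      exact ⟨u, by rw [hv, Ed]⟩

lemma mem_of_toCfg_eq {m : ℕ} {s1 s2 : Finset (Sym2 (Fin (m+3)))}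
    (h1 : ∀ e ∈ s1, e ∈ (cycleGraph (m+3)).edgeSet)
    (hcfg : toCfg m s1 = toCfg m s2) {e} (he : e ∈ s1) : e ∈ s2 := by
  obtain ⟨i, rfl⟩ := edge_repr (h1 e he)
  have ht : toCfg m s1 i.val = true := toCfg_true.mpr ⟨i.isLt, by rw [Fin.eta]; exact he⟩
  rw [hcfg] at ht
  obtain ⟨h, he2⟩ := toCfg_true.mp ht
  rwa [Fin.eta] at he2

lemma hosoya_cyc (m : ℕ) : hosoya (cycleGraph (m+3)) = (cycSet (m+3)).ncard := by
  rw [hosoya, ← Nat.card_coe_set_eq]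
  apply Nat.card_eq_of_bijective
    (fun s => (⟨toCfg m s.1, toCfg_mem s.2⟩ : ↥(cycSet (m+3))))
  constructor
  · intro s1 s2 h
    have hc : toCfg m s1.1 = toCfg m s2.1 := congrArg Subtype.val h
    apply Subtype.ext
    apply Finset.ext
    intro e
    exact ⟨fun he => mem_of_toCfg_eq s1.2.1 hc he,
      fun he => mem_of_toCfg_eq s2.2.1 hc.symm he⟩
  · rintro ⟨f, hb, hnc, hw⟩
    classical
    set s : Finset (Sym2 (Fin (m+3))) :=
      (Finset.univ.filter (fun i : Fin (m+3) => f i.val = true)).image (Ed m) with hs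
    have smem : ∀ e, e ∈ s ↔ ∃ i, f i.val = true ∧ Ed m i = e := by
      intro e
      simp [hs]
    have aux : ∀ i j : Fin (m+3), f i.val = true → f j.val = true → j = i + 1 → False := by
      intro i j hfi hfj hji
      by_cases hlast : i = Fin.last (m+2)
      · rw [hlast, Fin.last_add_one] at hji
        refine hw ⟨?_, ?_⟩
        · rw [hji] at hfj; simpa using hfj
        · rw [hlast] at hfi; simpa using hfi
      · have hv : j.val = i.val + 1 := by rw [hji, Fin.val_add_one, if_neg hlast]
        exact hnc i.val ⟨hfi, by rw [← hv]; exact hfj⟩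
    have hMs : IsM m s := by
      constructor
      · intro e he
        obtain ⟨i, -, rfl⟩ := (smem e).mp he
        exact Ed_mem m i
      · intro e1 he1 e2 he2 hne v hv1 hv2
        obtain ⟨i, hfi, rfl⟩ := (smem e1).mp (Finset.mem_coe.mp he1)
        obtain ⟨j, hfj, rfl⟩ := (smem e2).mp (Finset.mem_coe.mp he2)
        have hij : i ≠ j := fun h => hne (by rw [h])
        rcases (Ed_vmem m i v).mp hv1 with h1 | h1 <;>
          rcases (Ed_vmem m j v).mp hv2 with h2 | h2
        · exact hij (h1 ▸ h2 ▸ rfl)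
        · exact aux j i hfj hfi (by rw [← h1, h2])
        · exact aux i j hfi hfj (by rw [← h2, h1])
        · exact hij (add_right_cancel (a := i) (b := (1:Fin (m+3))) (by rw [← h1, h2]))
    refine ⟨⟨s, hMs.1, hMs.2⟩, ?_⟩
    apply Subtype.ext
    show toCfg m s = f
    funext k
    by_cases hk : k < m+3
    · have hd : toCfg m s k = decide (Ed m ⟨k, hk⟩ ∈ s) := by
        unfold toCfg; rw [dif_pos hk]
      rw [hd]
      cases hfk : f k with
      | true =>
        apply decide_eq_true
        exact (smem _).mpr ⟨⟨k, hk⟩, hfk, rfl⟩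
      | false =>
        apply decide_eq_false
        intro hmem
        obtain ⟨j, hfj, hEj⟩ := (smem _).mp hmem
        have := Ed_inj m hEj
        rw [this] at hfj
        simp at hfj
        rw [hfj] at hfk
        simp at hfk
    · unfold toCfg
      rw [dif_neg hk]
      exact (bdd_false hb (by omega)).symm

theorem hosoya_cycleGraph (n : ℕ) (hn : 3 ≤ n) :
    hosoya (SimpleGraph.cycleGraph n) = lucas n := by
  obtain ⟨m, rfl⟩ : ∃ m, n = m + 3 := ⟨n - 3, by omega⟩
  rw [hosoya_cyc m, cyc_lucas m]
end

section
/- Let f_n be defined by f_0 = 1, f_1 = m+1, and f_n = (m+1) f_{n-1} + r f_{n-2} if n is even, f_n = (m+1) f_{n-1} + s f_{n-2} if n is odd, where m ≥ 0 and r, s ≥ 1 are integers. Then the even-indexed subsequence satisfies f_{2n} = M f_{2n-2} - r s f_{2n-4} for all n ≥ 2, where M = (m+1)^2 + r + s. -/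
/-- The even-indexed subsequence of the alternating three-term recurrence
satisfies `f (2n) = M f (2n-2) - r s f (2n-4)` with `M = (m+1)^2 + r + s`. -/
theorem even_subseq_recurrence (m r s : ℤ) (hm : 0 ≤ m) (hr : 1 ≤ r) (hs : 1 ≤ s)
    (f : ℕ → ℤ) (hf0 : f 0 = 1) (hf1 : f 1 = m + 1)
    (hf : ∀ n, 2 ≤ n →
      f n = (m + 1) * f (n - 1) + (if Even n then r else s) * f (n - 2)) :
    ∀ n, 2 ≤ n →
      f (2 * n) = ((m + 1) ^ 2 + r + s) * f (2 * n - 2) - r * s * f (2 * n - 4) := by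
  intro n hn
  obtain ⟨k, rfl⟩ : ∃ k, n = k + 2 := ⟨n - 2, by omega⟩
  have h1 := hf (2 * k + 4) (by omega)
  have h2 := hf (2 * k + 3) (by omega)
  have h3 := hf (2 * k + 2) (by omega)
  have e1 : 2 * (k + 2) = 2 * k + 4 := by ring
  have hev1 : Even (2 * k + 4) := ⟨k + 2, by ring⟩
  have hev3 : Even (2 * k + 2) := ⟨k + 1, by ring⟩
  have hod : ¬ Even (2 * k + 3) := by simp [Nat.even_add_one, parity_simps]
  rw [if_pos hev1] at h1
  rw [if_neg hod] at h2
  rw [if_pos hev3] at h3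
  have i1 : 2 * k + 4 - 1 = 2 * k + 3 := by omega
  have i2 : 2 * k + 4 - 2 = 2 * k + 2 := by omega
  have i3 : 2 * k + 3 - 1 = 2 * k + 2 := by omega
  have i4 : 2 * k + 3 - 2 = 2 * k + 1 := by omega
  have i5 : 2 * k + 2 - 1 = 2 * k + 1 := by omega
  have i6 : 2 * k + 2 - 2 = 2 * k := by omega
  have i7 : 2 * k + 4 - 2 = 2 * k + 2 := by omega
  have i8 : 2 * k + 4 - 4 = 2 * k := by omega
  rw [i1, i2] at h1
  rw [i3, i4] at h2
  rw [i5, i6] at h3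
  rw [e1, i7, i8, h1, h2]
  nlinarith [h3]
end

section
/- Let M, r, s be positive integers with M > 2rs. Then for n ≥ 2, the negative continued fraction M − rs/(M − rs/(... − rs/(M − M/2))) with n levels equals the regular-type continued fraction (M−1) + 1/(1 + rs/((M−rs−1) + 1/(1 + rs/((M−rs−1) + ... + 1/(1 + 2rs/(M−2rs)))))), where the pattern 1/(1 + rs/(M−rs−1 + ...)) repeats and the final partial quotient is 2rs/(M−2rs); i.e., both expressions define the same rational number u_n/u_{n-1} for the Lucas-type sequence u_0 = 2, u_1 = M, u_n = M u_{n-1} − rs u_{n-2}. -/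
set_option maxHeartbeats 1000000 in
/-- For positive integers `M, r, s` with `M > 2rs`, the `n`-level negative
continued fraction `M - rs/(M - rs/(⋯ - rs/(M - M/2)))` and the regular-type
continued fraction
`(M-1) + 1/(1 + rs/((M-rs-1) + 1/(1 + rs/(⋯ + 1/(1 + 2rs/(M-2rs))))))`
both equal `u n / u (n-1)` for the Lucas-type sequence `u 0 = 2`, `u 1 = M`,
`u n = M u (n-1) - rs u (n-2)`. -/
theorem negative_cf_eq_regular_cf (M r s : ℕ) (hM : 0 < M) (hr : 0 < r) (hs : 0 < s)
    (hMrs : 2 * r * s < M)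
    (u : ℕ → ℚ) (hu0 : u 0 = 2) (hu1 : u 1 = (M : ℚ))
    (hu : ∀ k, 2 ≤ k → u k = (M : ℚ) * u (k - 1) - (r : ℚ) * s * u (k - 2))
    (t : ℕ → ℚ) (ht1 : t 1 = (M : ℚ) - (M : ℚ) / 2)
    (ht : ∀ k, 1 ≤ k → t (k + 1) = (M : ℚ) - (r : ℚ) * s / t k)
    (e : ℕ → ℚ) (he1 : e 1 = 1 + 2 * (r : ℚ) * s / ((M : ℚ) - 2 * r * s))
    (he : ∀ k, 1 ≤ k →
      e (k + 1) = 1 + (r : ℚ) * s / (((M : ℚ) - (r : ℚ) * s - 1) + 1 / e k)) :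
    ∀ n, 2 ≤ n →
      t n = u n / u (n - 1) ∧
      ((M : ℚ) - 1) + 1 / e (n - 1) = u n / u (n - 1) := by
  have hrsn : 1 ≤ r * s := Nat.one_le_iff_ne_zero.mpr (by positivity)
  have hrs1 : (1 : ℚ) ≤ (r : ℚ) * s := by exact_mod_cast hrsn
  have hMrsQ : 2 * (r : ℚ) * s < (M : ℚ) := by exact_mod_cast hMrs
  have hM2n : r * s + 2 ≤ M := by
    have h2 : 2 * r * s = r * s + r * s := by ring
    omega
  have hM2 : (r : ℚ) * s + 2 ≤ (M : ℚ) := by exact_mod_cast hM2n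
  -- rewrite recurrence in shifted form
  have hu' : ∀ m : ℕ, u (m + 2) = (M : ℚ) * u (m + 1) - (r : ℚ) * s * u m := by
    intro m
    have hrec := hu (m + 2) (by omega)
    rw [show m + 2 - 1 = m + 1 from rfl, show m + 2 - 2 = m from rfl] at hrec
    exact hrec
  -- positivity and monotonicity of u
  have hmono : ∀ k, 0 < u k ∧ u k ≤ u (k + 1) := by
    intro k
    induction k with
    | zero =>
      constructor
      · rw [hu0]; norm_num
      · rw [hu0, hu1]; nlinarith
    | succ m ih =>
      obtain ⟨h1, h2⟩ := ih
      have h3 : 0 < u (m + 1) := lt_of_lt_of_le h1 h2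
      refine ⟨h3, ?_⟩
      rw [show m + 1 + 1 = m + 2 from rfl, hu' m]
      nlinarith
  have hupos : ∀ k, 0 < u k := fun k => (hmono k).1
  have hune : ∀ k, u k ≠ 0 := fun k => ne_of_gt (hupos k)
  -- gap: rs * u k < u (k+1)
  have hgap : ∀ k, (r : ℚ) * s * u k < u (k + 1) := by
    intro k
    induction k with
    | zero => rw [hu0, hu1]; nlinarith
    | succ m ih =>
      rw [show m + 1 + 1 = m + 2 from rfl, hu' m]
      have h1 := hupos m
      have h2 := hupos (m + 1)
      nlinarith
  -- t formula
  have htf : ∀ n, 1 ≤ n → t n = u n / u (n - 1) := by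
    intro n hn
    induction n with
    | zero => omega
    | succ m ih =>
      rcases Nat.eq_or_lt_of_le hn with h | h
      · have hm : m = 0 := by omega
        subst hm
        show t 1 = u 1 / u 0
        rw [ht1, hu1, hu0]
        ring_nf
      · have hm : 1 ≤ m := by omega
        have htm := ih hm
        rw [ht m hm, htm, Nat.add_sub_cancel]
        obtain ⟨p, hp⟩ : ∃ p, m = p + 1 := ⟨m - 1, by omega⟩
        subst hp
        rw [show p + 1 + 1 = p + 2 from rfl, hu' p, Nat.add_sub_cancel]
        have h1 := hune p
        have h2 := hune (p + 1)
        field_simp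
  -- e formula
  have hef : ∀ k, 1 ≤ k → e k = u k / (u k - (r : ℚ) * s * u (k - 1)) := by
    intro k hk
    induction k with
    | zero => omega
    | succ m ih =>
      rcases Nat.eq_or_lt_of_le hk with h | h
      · have hm : m = 0 := by omega
        subst hm
        show e 1 = u 1 / (u 1 - (r : ℚ) * s * u 0)
        rw [he1, hu1, hu0]
        have hd : (M : ℚ) - 2 * r * s ≠ 0 := by nlinarith
        have hd2 : (M : ℚ) - (r : ℚ) * s * 2 ≠ 0 := by nlinarith
        rw [eq_div_iff hd2]
        field_simp
        ring
      · have hm : 1 ≤ m := by omega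
        have hem := ih hm
        obtain ⟨p, hp⟩ : ∃ p, m = p + 1 := ⟨m - 1, by omega⟩
        subst hp
        rw [Nat.add_sub_cancel] at hem ⊢
        have hg : (r : ℚ) * s * u p < u (p + 1) := hgap p
        have hg2 : (r : ℚ) * s * u (p + 1) < u (p + 2) := hgap (p + 1)
        have h1 := hupos (p + 1)
        have h1' := hune (p + 1)
        have hd1 : u (p + 1) - (r : ℚ) * s * u p ≠ 0 := ne_of_gt (by linarith)
        have hd2 : u (p + 2) - (r : ℚ) * s * u (p + 1) ≠ 0 := ne_of_gt (by linarith)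
        have hA : (M : ℚ) - (r : ℚ) * s - 1 + 1 / (u (p + 1) / (u (p + 1) - (r : ℚ) * s * u p))
            = (u (p + 2) - (r : ℚ) * s * u (p + 1)) / u (p + 1) := by
          rw [hu' p]
          field_simp
          ring
        rw [he (p + 1) hm, hem, hA, show p + 1 + 1 = p + 2 from rfl]
        field_simp
        ring
  -- final
  intro n hn
  refine ⟨htf n (by omega), ?_⟩
  have hn1 : 1 ≤ n - 1 := by omega
  have hen := hef (n - 1) hn1
  obtain ⟨p, hp⟩ : ∃ p, n = p + 2 := ⟨n - 2, by omega⟩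
  subst hp
  rw [show p + 2 - 1 = p + 1 from rfl] at hen ⊢
  rw [show p + 1 - 1 = p from rfl] at hen
  rw [hen, hu' p]
  have hg : (r : ℚ) * s * u p < u (p + 1) := hgap p
  have h1 := hupos (p + 1)
  have h1' := hune (p + 1)
  have hd1 : u (p + 1) - (r : ℚ) * s * u p ≠ 0 := ne_of_gt (by linarith)
  field_simp
  ring
end

section
/- The Hosoya index of the cyclic graph C_{n,a,b} (a cycle on n vertices where every edge is replaced by b parallel edges and each vertex carries a pendant leaves) equals the Hosoya index of the caterpillar-bond graph D_n(a+1, ..., a+1; 2b, b, ..., b), for all integers n ≥ 3, a ≥ 0, b ≥ 1. -/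
/-- The Hosoya index of a multigraph with endpoint map `ends`: the number of
matchings (sets of pairwise vertex-disjoint non-loop edges, parallel edges
counted as distinct), including the empty matching. -/
noncomputable def hosoyaM {V E : Type*} (ends : E → Sym2 V) : ℕ :=
  Nat.card {s : Finset E // (∀ e ∈ s, ¬ (ends e).IsDiag) ∧
    (s : Set E).Pairwise fun e f => ∀ v ∈ ends e, v ∉ ends f}

/-- Vertices of the caterpillar-bond graph `D_n(a_0,…,a_{n-1}; b_1,…,b_{n-1})`. -/
def DVert (n : ℕ) (a : ℕ → ℕ) : Type :=
  Fin n ⊕ Σ i : Fin n, Fin (a i - 1)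

/-- Edges of the caterpillar-bond graph. -/
def DEdge (n : ℕ) (a b : ℕ → ℕ) : Type :=
  (Σ i : Fin (n - 1), Fin (b (i + 1))) ⊕ Σ i : Fin n, Fin (a i - 1)

/-- The endpoint map of the caterpillar-bond graph `D_n(a;b)`. -/
def Dends (n : ℕ) (a b : ℕ → ℕ) : DEdge n a b → Sym2 (DVert n a)
  | .inl ⟨i, _⟩ =>
      s(Sum.inl ⟨i.1, by omega⟩, Sum.inl ⟨i.1 + 1, by omega⟩)
  | .inr ⟨i, j⟩ => s(Sum.inl i, Sum.inr ⟨i, j⟩)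

/-- The endpoint map of the ring multigraph `C_{n,a,b}`: a cycle on `n` vertices
with every edge replaced by `b` parallel edges and `a` pendant leaves attached
to each cycle vertex. -/
def Cends (n a b : ℕ) : (Fin n × Fin b) ⊕ (Fin n × Fin a) → Sym2 (Fin n ⊕ Fin n × Fin a)
  | .inl (i, _) => s(Sum.inl i, Sum.inl ⟨(i.1 + 1) % n, Nat.mod_lt _ i.pos⟩)
  | .inr (i, j) => s(Sum.inl i, Sum.inr (i, j))

/-! ### Auxiliary development -/

section Aux

/-- A matching of a multigraph. -/
def IsMatch {V E : Type*} (ends : E → Sym2 V) (s : Finset E) : Prop :=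
  (∀ e ∈ s, ¬ (ends e).IsDiag) ∧
    (s : Set E).Pairwise fun e f => ∀ v ∈ ends e, v ∉ ends f

lemma isDiag_map_iff' {α β : Type*} {f : α → β} (hf : Function.Injective f) (z : Sym2 α) :
    (z.map f).IsDiag ↔ z.IsDiag := by
  induction z using Sym2.ind with
  | _ x y => simp [Sym2.map_pair_eq, hf.eq_iff]

lemma IsMatch.map_emb {V V' E E' : Type*} {endsC : E → Sym2 V} {endsD : E' → Sym2 V'}
    (g : E ↪ E') {σ : V → V'} (hσ : Function.Injective σ) {s : Finset E}
    (h : ∀ x ∈ s, endsD (g x) = (endsC x).map σ) (hs : IsMatch endsC s) :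
    IsMatch endsD (s.map g) := by
  constructor
  · intro e' he'
    rw [Finset.mem_map] at he'
    obtain ⟨x, hx, rfl⟩ := he'
    rw [h x hx, isDiag_map_iff' hσ]
    exact hs.1 x hx
  · intro e' he' f' hf' hne v hv hvf
    rw [Finset.mem_coe, Finset.mem_map] at he' hf'
    obtain ⟨x, hx, rfl⟩ := he'
    obtain ⟨y, hy, rfl⟩ := hf'
    have hxy : x ≠ y := fun hh => hne (by rw [hh])
    rw [h x hx, Sym2.mem_map] at hv
    rw [h y hy, Sym2.mem_map] at hvf
    obtain ⟨u, hu, rfl⟩ := hv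
    obtain ⟨w, hw, hww⟩ := hvf
    exact hs.2 (Finset.mem_coe.mpr hx) (Finset.mem_coe.mpr hy) hxy u hu ((hσ hww) ▸ hw)

lemma map_map_id' {α β : Type*} {e₁ : α ↪ β} {e₂ : β ↪ α} (h : ∀ x, e₂ (e₁ x) = x)
    (s : Finset α) : (s.map e₁).map e₂ = s := by
  ext x
  simp only [Finset.mem_map]
  constructor
  · rintro ⟨y, ⟨z, hz, rfl⟩, rfl⟩
    rwa [h]
  · intro hx
    exact ⟨e₁ x, ⟨x, hx, rfl⟩, h x⟩

lemma mod_rot1 {n : ℕ} (hn : 3 ≤ n) {i : ℕ} (h : i < n) : ((i + 1) % n + (n - 1)) % n = i := by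
  rcases Nat.lt_or_ge (i + 1) n with h1 | h1
  · rw [Nat.mod_eq_of_lt h1, show i + 1 + (n - 1) = i + n by omega, Nat.add_mod_right,
      Nat.mod_eq_of_lt h]
  · rw [show i + 1 = n by omega, Nat.mod_self, Nat.zero_add,
      Nat.mod_eq_of_lt (by omega)]
    omega

lemma mod_rot2 {n : ℕ} (hn : 3 ≤ n) {i : ℕ} (h : i < n) : ((i + (n - 1)) % n + 1) % n = i := by
  rcases Nat.eq_zero_or_pos i with rfl | h1
  · rw [Nat.zero_add, Nat.mod_eq_of_lt (show n - 1 < n by omega),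
      show n - 1 + 1 = n by omega, Nat.mod_self]
  · rw [show i + (n - 1) = (i - 1) + n by omega, Nat.add_mod_right,
      Nat.mod_eq_of_lt (show i - 1 < n by omega), show i - 1 + 1 = i by omega,
      Nat.mod_eq_of_lt h]

end Aux

section Ring

variable (n a b : ℕ)

/-- Edge type of the ring. -/
abbrev ECt := (Fin n × Fin b) ⊕ (Fin n × Fin a)

/-- Edge type of the caterpillar-bond graph. -/
abbrev EDt := DEdge n (fun _ => a + 1) (fun i => if i = 1 then 2 * b else b)

/-- Vertex type of the ring. -/
abbrev VCt := Fin n ⊕ Fin n × Fin a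

/-- Vertex type of the caterpillar-bond graph. -/
abbrev VDt := DVert n (fun _ => a + 1)

/-! Extensionality helpers (all proofs by proof irrelevance). -/

lemma ECinl_ext {i i' j j' : ℕ} {hi : i < n} {hi' : i' < n} {hj : j < b} {hj' : j' < b}
    (h1 : i = i') (h2 : j = j') :
    (Sum.inl (⟨i, hi⟩, ⟨j, hj⟩) : ECt n a b) = Sum.inl (⟨i', hi'⟩, ⟨j', hj'⟩) := by
  subst h1; subst h2; rfl

lemma ECinr_ext {i i' : ℕ} {hi : i < n} {hi' : i' < n} {j j' : Fin a}
    (h1 : i = i') (h2 : j = j') :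
    (Sum.inr (⟨i, hi⟩, j) : ECt n a b) = Sum.inr (⟨i', hi'⟩, j') := by
  subst h1; subst h2; rfl

lemma EDinl_ext {i i' k k' : ℕ} {hi : i < n - 1} {hi' : i' < n - 1}
    {hk : k < if i + 1 = 1 then 2 * b else b} {hk' : k' < if i' + 1 = 1 then 2 * b else b}
    (h1 : i = i') (h2 : k = k') :
    (Sum.inl ⟨⟨i, hi⟩, ⟨k, hk⟩⟩ : EDt n a b) = Sum.inl ⟨⟨i', hi'⟩, ⟨k', hk'⟩⟩ := by
  subst h1; subst h2; rfl

lemma EDinr_ext {i i' : ℕ} {hi : i < n} {hi' : i' < n} {j j' : Fin a}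
    (h1 : i = i') (h2 : j = j') :
    (Sum.inr ⟨⟨i, hi⟩, j⟩ : EDt n a b) = Sum.inr ⟨⟨i', hi'⟩, j'⟩ := by
  subst h1; subst h2; rfl

lemma VDinl_ext {i i' : ℕ} {hi : i < n} {hi' : i' < n} (h1 : i = i') :
    (Sum.inl ⟨i, hi⟩ : VDt n a) = Sum.inl ⟨i', hi'⟩ := by
  subst h1; rfl

lemma VDinr_ext {i i' : ℕ} {hi : i < n} {hi' : i' < n} {j j' : Fin a}
    (h1 : i = i') (h2 : j = j') :
    (Sum.inr ⟨⟨i, hi⟩, j⟩ : VDt n a) = Sum.inr ⟨⟨i', hi'⟩, j'⟩ := by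
  subst h1; subst h2; rfl

lemma VCinl_ext {i i' : ℕ} {hi : i < n} {hi' : i' < n} (h1 : i = i') :
    (Sum.inl ⟨i, hi⟩ : VCt n a) = Sum.inl ⟨i', hi'⟩ := by
  subst h1; rfl

lemma VCinr_ext {i i' : ℕ} {hi : i < n} {hi' : i' < n} {j j' : Fin a}
    (h1 : i = i') (h2 : j = j') :
    (Sum.inr (⟨i, hi⟩, j) : VCt n a) = Sum.inr (⟨i', hi'⟩, j') := by
  subst h1; subst h2; rfl

/-! The edge bijections, one for each "flag" (whether the matching uses a
closing edge of the ring / an extra copy of the doubled first bond). -/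

def fCD (hn : 3 ≤ n) : Bool → ECt n a b →
    (Σ i : Fin (n - 1), Fin (if (i : ℕ) + 1 = 1 then 2 * b else b)) ⊕ Σ _ : Fin n, Fin (a + 1 - 1)
  | true, .inl (i, j) =>
      if h2 : i.1 = n - 2 then
        .inl ⟨⟨0, by omega⟩, ⟨j.1, by
          have := j.2
          show j.1 < if 0 + 1 = 1 then 2 * b else b
          split <;> omega⟩⟩
      else if h1 : i.1 = n - 1 then
        .inl ⟨⟨0, by omega⟩, ⟨b + j.1, by
          have := j.2
          show b + j.1 < if 0 + 1 = 1 then 2 * b else b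
          split <;> omega⟩⟩
      else
        .inl ⟨⟨i.1 + 1, by have := i.2; omega⟩, ⟨j.1, by
          have := j.2
          show j.1 < if i.1 + 1 + 1 = 1 then 2 * b else b
          split <;> omega⟩⟩
  | true, .inr (i, j) => .inr ⟨⟨(i.1 + 1) % n, Nat.mod_lt _ (by omega)⟩, j⟩
  | false, .inl (i, j) =>
      if h1 : i.1 = n - 1 then
        .inl ⟨⟨0, by omega⟩, ⟨b + j.1, by
          have := j.2
          show b + j.1 < if 0 + 1 = 1 then 2 * b else b
          split <;> omega⟩⟩
      else
        .inl ⟨⟨i.1, by have := i.2; omega⟩, ⟨j.1, by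
          have := j.2
          show j.1 < if i.1 + 1 = 1 then 2 * b else b
          split <;> omega⟩⟩
  | false, .inr (i, j) => .inr ⟨i, j⟩

def fDC (hn : 3 ≤ n) : Bool → EDt n a b → ECt n a b
  | true, .inl ⟨i, k⟩ =>
      if h0 : i.1 = 0 then
        if hk : k.1 < b then .inl (⟨n - 2, by omega⟩, ⟨k.1, hk⟩)
        else .inl (⟨n - 1, by omega⟩, ⟨k.1 - b, by have := k.2; beta_reduce at this; split at this <;> omega⟩)
      else
        .inl (⟨i.1 - 1, by have := i.2; omega⟩,
          ⟨k.1, by have := k.2; beta_reduce at this; split at this <;> omega⟩)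
  | true, .inr ⟨i, j⟩ => .inr (⟨(i.1 + (n - 1)) % n, Nat.mod_lt _ (by omega)⟩, j)
  | false, .inl ⟨i, k⟩ =>
      if h0 : i.1 = 0 then
        if hk : k.1 < b then .inl (⟨0, by omega⟩, ⟨k.1, hk⟩)
        else .inl (⟨n - 1, by omega⟩, ⟨k.1 - b, by have := k.2; beta_reduce at this; split at this <;> omega⟩)
      else
        .inl (⟨i.1, by have := i.2; omega⟩,
          ⟨k.1, by have := k.2; beta_reduce at this; split at this <;> omega⟩)
  | false, .inr ⟨i, j⟩ => .inr (⟨i.1, i.2⟩, j)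

/-! The vertex maps. -/

def vCD (hn : 3 ≤ n) : Bool → VCt n a → VDt n a
  | true, .inl i => .inl ⟨(i.1 + 1) % n, Nat.mod_lt _ (by omega)⟩
  | true, .inr (i, j) => .inr ⟨⟨(i.1 + 1) % n, Nat.mod_lt _ (by omega)⟩, j⟩
  | false, .inl i => .inl i
  | false, .inr (i, j) => .inr ⟨i, j⟩

def vDC (hn : 3 ≤ n) : Bool → VDt n a → VCt n a
  | true, .inl i => .inl ⟨(i.1 + (n - 1)) % n, Nat.mod_lt _ (by omega)⟩
  | true, .inr ⟨i, j⟩ => .inr (⟨(i.1 + (n - 1)) % n, Nat.mod_lt _ (by omega)⟩, j)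
  | false, .inl i => .inl i
  | false, .inr ⟨i, j⟩ => .inr (⟨i.1, i.2⟩, j)

lemma vDC_vCD (hn : 3 ≤ n) (f : Bool) (v : VCt n a) :
    vDC n a hn f (vCD n a hn f v) = v := by
  rcases v with ⟨i, hi⟩ | ⟨⟨i, hi⟩, j⟩ <;> cases f <;> simp only [vCD, vDC]
  · exact VCinl_ext n a (mod_rot1 hn hi)
  · exact VCinr_ext n a (mod_rot1 hn hi) rfl

lemma vCD_vDC (hn : 3 ≤ n) (f : Bool) (v : VDt n a) :
    vCD n a hn f (vDC n a hn f v) = v := by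
  rcases v with ⟨i, hi⟩ | ⟨⟨i, hi⟩, j⟩ <;> cases f <;> simp only [vCD, vDC]
  all_goals first
    | rfl
    | exact VDinl_ext n a (mod_rot2 hn hi)
    | exact VDinr_ext n a (mod_rot2 hn hi) rfl

lemma vCD_inj (hn : 3 ≤ n) (f : Bool) : Function.Injective (vCD n a hn f) :=
  Function.LeftInverse.injective (g := vDC n a hn f) (vDC_vCD n a hn f)

lemma vDC_inj (hn : 3 ≤ n) (f : Bool) : Function.Injective (vDC n a hn f) :=
  Function.LeftInverse.injective (g := vCD n a hn f) (vCD_vDC n a hn f)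

/-! Left/right inverse lemmas for the edge maps. -/

lemma fDC_fCD (hn : 3 ≤ n) (f : Bool) (x : ECt n a b) :
    fDC n a b hn f (fCD n a b hn f x) = x := by
  rcases x with ⟨⟨i, hi⟩, ⟨j, hj⟩⟩ | ⟨⟨i, hi⟩, j⟩ <;> cases f <;>
      simp only [fCD] <;> try split_ifs
  all_goals simp only [fDC, Fin.val_mk] at *
  all_goals try split_ifs
  all_goals try simp only [Fin.val_mk] at *
  all_goals
    first
      | omega
      | rfl
      | (apply ECinl_ext <;> omega)
      | (exact ECinr_ext n a b (mod_rot1 hn hi) rfl)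

lemma fCD_fDC (hn : 3 ≤ n) (f : Bool) (y : EDt n a b) :
    fCD n a b hn f (fDC n a b hn f y) = y := by
  rcases y with ⟨⟨i, hi⟩, ⟨k, hk⟩⟩ | ⟨⟨i, hi⟩, j⟩ <;> cases f <;>
      simp only [fDC] <;> try split_ifs
  all_goals simp only [fCD, Fin.val_mk] at *
  all_goals try split_ifs
  all_goals try simp only [Fin.val_mk] at *
  all_goals
    first
      | omega
      | rfl
      | (apply EDinl_ext <;> omega)
      | (exact EDinr_ext n a b (mod_rot2 hn hi) rfl)

def embCD (hn : 3 ≤ n) (f : Bool) : ECt n a b ↪ EDt n a b :=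
  ⟨fCD n a b hn f,
    Function.LeftInverse.injective (g := fDC n a b hn f) (fDC_fCD n a b hn f)⟩

def embDC (hn : 3 ≤ n) (f : Bool) : EDt n a b ↪ ECt n a b :=
  ⟨fDC n a b hn f,
    Function.LeftInverse.injective (g := fCD n a b hn f) (fCD_fDC n a b hn f)⟩

/-! Edge classifiers. -/

def isClosingB : ECt n a b → Bool
  | .inl (i, _) => decide (i.1 = n - 1)
  | .inr _ => false

def isN2B : ECt n a b → Bool
  | .inl (i, _) => decide (i.1 = n - 2)
  | .inr _ => false

def isExtraB : EDt n a b → Bool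
  | .inl ⟨i, k⟩ => decide (i.1 = 0 ∧ b ≤ k.1)
  | .inr _ => false

def isLowB : EDt n a b → Bool
  | .inl ⟨i, k⟩ => decide (i.1 = 0 ∧ k.1 < b)
  | .inr _ => false

lemma isExtraB_fCD (hn : 3 ≤ n) (f : Bool) (x : ECt n a b) :
    isExtraB n a b (fCD n a b hn f x) = isClosingB n a b x := by
  rcases x with ⟨⟨i, hi⟩, ⟨j, hj⟩⟩ | ⟨⟨i, hi⟩, j⟩ <;> cases f <;>
      simp only [fCD] <;> try split_ifs
  all_goals simp only [isExtraB, isClosingB, Fin.val_mk] at *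
  all_goals try rfl
  all_goals try simp_all only [decide_eq_decide, true_and, not_true_eq_false, iff_true, iff_false, true_iff, false_iff, false_and, and_false, and_true]
  all_goals omega

lemma isClosingB_fDC (hn : 3 ≤ n) (f : Bool) (y : EDt n a b) :
    isClosingB n a b (fDC n a b hn f y) = isExtraB n a b y := by
  rcases y with ⟨⟨i, hi⟩, ⟨k, hk⟩⟩ | ⟨⟨i, hi⟩, j⟩ <;> cases f <;>
      simp only [fDC] <;> try split_ifs
  all_goals simp only [isExtraB, isClosingB, Fin.val_mk] at *
  all_goals try rfl
  all_goals try simp_all only [decide_eq_decide, true_and, not_true_eq_false, iff_true, iff_false, true_iff, false_iff, false_and, and_false, and_true]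
  all_goals omega

/-! Conjugation of the endpoint maps by the edge/vertex maps. -/

lemma ends_CD_false (hn : 3 ≤ n) (x : ECt n a b) (hx : isClosingB n a b x = false) :
    Dends n (fun _ => a + 1) (fun i => if i = 1 then 2 * b else b) (fCD n a b hn false x) =
      (Cends n a b x).map (vCD n a hn false) := by
  rcases x with ⟨⟨i, hi⟩, ⟨j, hj⟩⟩ | ⟨⟨i, hi⟩, j⟩
  · have hne : i ≠ n - 1 := by simpa [isClosingB] using hx
    simp only [fCD, dif_neg hne, Dends, Cends, Sym2.map_pair_eq, vCD, Fin.val_mk, dite_true, dite_false]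
    refine Sym2.eq_iff.mpr ?_
    left
    exact ⟨rfl, VDinl_ext n a (show i + 1 = (i + 1) % n from
      (Nat.mod_eq_of_lt (by omega)).symm)⟩
  · simp only [fCD, Dends, Cends, Sym2.map_pair_eq, vCD, Fin.val_mk, dite_true, dite_false]

lemma ends_CD_true (hn : 3 ≤ n) (x : ECt n a b) (hx : isN2B n a b x = false) :
    Dends n (fun _ => a + 1) (fun i => if i = 1 then 2 * b else b) (fCD n a b hn true x) =
      (Cends n a b x).map (vCD n a hn true) := by
  rcases x with ⟨⟨i, hi⟩, ⟨j, hj⟩⟩ | ⟨⟨i, hi⟩, j⟩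
  · have hne : i ≠ n - 2 := by simpa [isN2B] using hx
    by_cases h1 : i = n - 1
    · subst h1
      have e1 : (n - 1 + 1) % n = 0 := by
        rw [show n - 1 + 1 = n by omega, Nat.mod_self]
      simp only [fCD, dif_neg hne, Dends, Cends, Sym2.map_pair_eq, vCD, Fin.val_mk, dite_true, dite_false]
      refine Sym2.eq_iff.mpr ?_
      left
      constructor
      · exact VDinl_ext n a (show (0 : ℕ) = (n - 1 + 1) % n from e1.symm)
      · exact VDinl_ext n a (show (0 : ℕ) + 1 = ((n - 1 + 1) % n + 1) % n from by
          rw [e1, Nat.zero_add, Nat.mod_eq_of_lt (by omega)])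
    · have h2 : i + 1 < n - 1 := by omega
      simp only [fCD, dif_neg hne, dif_neg h1, Dends, Cends, Sym2.map_pair_eq, vCD, Fin.val_mk, dite_true, dite_false]
      refine Sym2.eq_iff.mpr ?_
      left
      constructor
      · exact VDinl_ext n a (show i + 1 = (i + 1) % n from
          (Nat.mod_eq_of_lt (by omega)).symm)
      · exact VDinl_ext n a (show i + 1 + 1 = ((i + 1) % n + 1) % n from by
          rw [Nat.mod_eq_of_lt (show i + 1 < n by omega),
            Nat.mod_eq_of_lt (show i + 1 + 1 < n by omega)])
  · simp only [fCD, Dends, Cends, Sym2.map_pair_eq, vCD, Fin.val_mk, dite_true, dite_false]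

lemma ends_DC_false (hn : 3 ≤ n) (y : EDt n a b) (hy : isExtraB n a b y = false) :
    Cends n a b (fDC n a b hn false y) =
      (Dends n (fun _ => a + 1) (fun i => if i = 1 then 2 * b else b) y).map
        (vDC n a hn false) := by
  rcases y with ⟨⟨i, hi⟩, ⟨k, hk⟩⟩ | ⟨⟨i, hi⟩, j⟩
  · by_cases h0 : i = 0
    · have hkb : k < b := by
        subst h0
        simp [isExtraB] at hy
        omega
      simp only [fDC, dif_pos h0, dif_pos hkb, Cends, Dends, Sym2.map_pair_eq, vDC, Fin.val_mk, dite_true, dite_false]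
      refine Sym2.eq_iff.mpr ?_
      left
      constructor
      · exact VCinl_ext n a (show (0 : ℕ) = i from h0.symm)
      · exact VCinl_ext n a (show ((0 : ℕ) + 1) % n = i + 1 from by
          rw [Nat.mod_eq_of_lt (by omega)]; omega)
    · simp only [fDC, dif_neg h0, Cends, Dends, Sym2.map_pair_eq, vDC, Fin.val_mk, dite_true, dite_false]
      refine Sym2.eq_iff.mpr ?_
      left
      exact ⟨rfl, VCinl_ext n a (show (i + 1) % n = i + 1 from
        Nat.mod_eq_of_lt (by omega))⟩
  · simp only [fDC, Cends, Dends, Sym2.map_pair_eq, vDC, Fin.val_mk, dite_true, dite_false]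
    rfl

lemma ends_DC_true (hn : 3 ≤ n) (y : EDt n a b) (hy : isLowB n a b y = false) :
    Cends n a b (fDC n a b hn true y) =
      (Dends n (fun _ => a + 1) (fun i => if i = 1 then 2 * b else b) y).map
        (vDC n a hn true) := by
  rcases y with ⟨⟨i, hi⟩, ⟨k, hk⟩⟩ | ⟨⟨i, hi⟩, j⟩
  · by_cases h0 : i = 0
    · have hkb : ¬ k < b := by
        subst h0
        simp [isLowB] at hy
        omega
      subst h0
      simp only [fDC, dif_neg hkb, Cends, Dends, Sym2.map_pair_eq, vDC, Fin.val_mk, dite_true, dite_false]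
      refine Sym2.eq_iff.mpr ?_
      left
      constructor
      · exact VCinl_ext n a (show n - 1 = ((0 : ℕ) + (n - 1)) % n from by
          rw [Nat.zero_add, Nat.mod_eq_of_lt (by omega)])
      · exact VCinl_ext n a (show (n - 1 + 1) % n = ((0 : ℕ) + 1 + (n - 1)) % n from by
          rw [show n - 1 + 1 = n by omega, Nat.mod_self,
            show (0 : ℕ) + 1 + (n - 1) = n by omega, Nat.mod_self])
    · simp only [fDC, dif_neg h0, Cends, Dends, Sym2.map_pair_eq, vDC, Fin.val_mk, dite_true, dite_false]
      refine Sym2.eq_iff.mpr ?_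
      left
      constructor
      · exact VCinl_ext n a (show i - 1 = (i + (n - 1)) % n from by
          rw [show i + (n - 1) = (i - 1) + n by omega, Nat.add_mod_right,
            Nat.mod_eq_of_lt (by omega)])
      · exact VCinl_ext n a (show (i - 1 + 1) % n = (i + 1 + (n - 1)) % n from by
          rw [show i - 1 + 1 = i by omega, Nat.mod_eq_of_lt (by omega),
            show i + 1 + (n - 1) = i + n by omega, Nat.add_mod_right,
            Nat.mod_eq_of_lt (by omega)])
  · simp only [fDC, Cends, Dends, Sym2.map_pair_eq, vDC, Fin.val_mk, dite_true, dite_false]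
    rfl

/-! Exclusion lemmas. -/

lemma no_n2 (hn : 3 ≤ n) {s : Finset (ECt n a b)} (hs : IsMatch (Cends n a b) s)
    {x y : ECt n a b} (hxs : x ∈ s) (hys : y ∈ s)
    (hx : isClosingB n a b x = true) (hy : isN2B n a b y = true) : False := by
  rcases x with ⟨⟨i, hi⟩, jx⟩ | px
  swap
  · simp [isClosingB] at hx
  rcases y with ⟨⟨i', hi'⟩, jy⟩ | py
  swap
  · simp [isN2B] at hy
  simp only [isClosingB, decide_eq_true_eq] at hx
  simp only [isN2B, decide_eq_true_eq] at hy
  have hne : (Sum.inl (⟨i, hi⟩, jx) : ECt n a b) ≠ Sum.inl (⟨i', hi'⟩, jy) := by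
    intro h
    simp only [Sum.inl.injEq, Prod.mk.injEq, Fin.mk.injEq] at h
    omega
  refine hs.2 (Finset.mem_coe.mpr hxs) (Finset.mem_coe.mpr hys) hne
    (Sum.inl ⟨n - 1, by omega⟩) ?_ ?_
  · simp only [Cends, Sym2.mem_iff]
    exact Or.inl (VCinl_ext n a (by omega))
  · simp only [Cends, Sym2.mem_iff]
    refine Or.inr (VCinl_ext n a (show n - 1 = (i' + 1) % n from by
      rw [Nat.mod_eq_of_lt (show i' + 1 < n by omega)]; omega))

lemma extra_low_ne (y : EDt n a b) (h1 : isExtraB n a b y = true)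
    (h2 : isLowB n a b y = true) : False := by
  rcases y with ⟨⟨i, hi⟩, k⟩ | py
  · simp only [isExtraB, decide_eq_true_eq] at h1
    simp only [isLowB, decide_eq_true_eq] at h2
    omega
  · simp [isExtraB] at h1

lemma no_low (hn : 3 ≤ n)
    {t : Finset (EDt n a b)}
    (ht : IsMatch (Dends n (fun _ => a + 1) (fun i => if i = 1 then 2 * b else b)) t)
    {x y : EDt n a b} (hxt : x ∈ t) (hyt : y ∈ t)
    (hx : isExtraB n a b x = true) (hy : isLowB n a b y = true) : False := by
  have hne : x ≠ y := by
    intro h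
    exact extra_low_ne n a b y (h ▸ hx) hy
  rcases x with ⟨⟨i, hi⟩, kx⟩ | px
  swap
  · simp [isExtraB] at hx
  rcases y with ⟨⟨i', hi'⟩, ky⟩ | py
  swap
  · simp [isLowB] at hy
  simp only [isExtraB, decide_eq_true_eq] at hx
  simp only [isLowB, decide_eq_true_eq] at hy
  refine ht.2 (Finset.mem_coe.mpr hxt) (Finset.mem_coe.mpr hyt) hne
    (Sum.inl ⟨0, by omega⟩) ?_ ?_
  · simp only [Dends, Sym2.mem_iff]
    exact Sym2.mem_iff.mpr (Or.inl (VDinl_ext n a (show 0 = i by omega)))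
  · simp only [Dends, Sym2.mem_iff]
    exact Sym2.mem_iff.mpr (Or.inl (VDinl_ext n a (show 0 = i' by omega)))

/-! Flag transfer. -/

lemma exists_extra_map (hn : 3 ≤ n) (f : Bool) (s : Finset (ECt n a b)) :
    (∃ y ∈ s.map (embCD n a b hn f), isExtraB n a b y = true) ↔
      ∃ x ∈ s, isClosingB n a b x = true := by
  constructor
  · rintro ⟨y, hy, hP⟩
    rw [Finset.mem_map] at hy
    obtain ⟨x, hx, rfl⟩ := hy
    refine ⟨x, hx, ?_⟩
    rwa [show ((embCD n a b hn f) x) = fCD n a b hn f x from rfl,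
      isExtraB_fCD] at hP
  · rintro ⟨x, hx, hP⟩
    refine ⟨_, Finset.mem_map_of_mem _ hx, ?_⟩
    rw [show ((embCD n a b hn f) x) = fCD n a b hn f x from rfl, isExtraB_fCD]
    exact hP

lemma exists_closing_map (hn : 3 ≤ n) (f : Bool) (t : Finset (EDt n a b)) :
    (∃ x ∈ t.map (embDC n a b hn f), isClosingB n a b x = true) ↔
      ∃ y ∈ t, isExtraB n a b y = true := by
  constructor
  · rintro ⟨x, hx, hP⟩
    rw [Finset.mem_map] at hx
    obtain ⟨y, hy, rfl⟩ := hx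
    refine ⟨y, hy, ?_⟩
    rwa [show ((embDC n a b hn f) y) = fDC n a b hn f y from rfl,
      isClosingB_fDC] at hP
  · rintro ⟨y, hy, hP⟩
    refine ⟨_, Finset.mem_map_of_mem _ hy, ?_⟩
    rw [show ((embDC n a b hn f) y) = fDC n a b hn f y from rfl, isClosingB_fDC]
    exact hP

/-! The forward and backward set maps. -/

open Classical in
noncomputable def Fset (hn : 3 ≤ n) (s : Finset (ECt n a b)) : Finset (EDt n a b) :=
  if ∃ x ∈ s, isClosingB n a b x = true then s.map (embCD n a b hn true)
  else s.map (embCD n a b hn false)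

open Classical in
noncomputable def Gset (hn : 3 ≤ n) (t : Finset (EDt n a b)) : Finset (ECt n a b) :=
  if ∃ y ∈ t, isExtraB n a b y = true then t.map (embDC n a b hn true)
  else t.map (embDC n a b hn false)

lemma Fset_isMatch (hn : 3 ≤ n) {s : Finset (ECt n a b)}
    (hs : IsMatch (Cends n a b) s) :
    IsMatch (Dends n (fun _ => a + 1) (fun i => if i = 1 then 2 * b else b))
      (Fset n a b hn s) := by
  unfold Fset
  split_ifs with h
  · refine IsMatch.map_emb _ (vCD_inj n a hn true) ?_ hs
    intro x hx
    refine ends_CD_true n a b hn x ?_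
    cases hxn : isN2B n a b x with
    | false => rfl
    | true =>
        obtain ⟨c, hcs, hc⟩ := h
        exact absurd (no_n2 n a b hn hs hcs hx hc hxn) id
  · refine IsMatch.map_emb _ (vCD_inj n a hn false) ?_ hs
    intro x hx
    refine ends_CD_false n a b hn x ?_
    cases hxn : isClosingB n a b x with
    | false => rfl
    | true => exact absurd ⟨x, hx, hxn⟩ h

lemma Gset_isMatch (hn : 3 ≤ n) {t : Finset (EDt n a b)}
    (ht : IsMatch (Dends n (fun _ => a + 1) (fun i => if i = 1 then 2 * b else b)) t) :
    IsMatch (Cends n a b) (Gset n a b hn t) := by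
  unfold Gset
  split_ifs with h
  · refine IsMatch.map_emb _ (vDC_inj n a hn true) ?_ ht
    intro y hy
    refine ends_DC_true n a b hn y ?_
    cases hyn : isLowB n a b y with
    | false => rfl
    | true =>
        obtain ⟨c, hct, hc⟩ := h
        exact absurd (no_low n a b hn ht hct hy hc hyn) id
  · refine IsMatch.map_emb _ (vDC_inj n a hn false) ?_ ht
    intro y hy
    refine ends_DC_false n a b hn y ?_
    cases hyn : isExtraB n a b y with
    | false => rfl
    | true => exact absurd ⟨y, hy, hyn⟩ h

lemma Gset_Fset (hn : 3 ≤ n) (s : Finset (ECt n a b)) :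
    Gset n a b hn (Fset n a b hn s) = s := by
  unfold Fset
  split_ifs with h
  · unfold Gset
    rw [if_pos ((exists_extra_map n a b hn true s).mpr h)]
    exact map_map_id' (fDC_fCD n a b hn true) s
  · unfold Gset
    rw [if_neg (fun hc => h ((exists_extra_map n a b hn false s).mp hc))]
    exact map_map_id' (fDC_fCD n a b hn false) s

lemma Fset_Gset (hn : 3 ≤ n) (t : Finset (EDt n a b)) :
    Fset n a b hn (Gset n a b hn t) = t := by
  unfold Gset
  split_ifs with h
  · unfold Fset
    rw [if_pos ((exists_closing_map n a b hn true t).mpr h)]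
    exact map_map_id' (fCD_fDC n a b hn true) t
  · unfold Fset
    rw [if_neg (fun hc => h ((exists_closing_map n a b hn false t).mp hc))]
    exact map_map_id' (fCD_fDC n a b hn false) t

noncomputable def matchEquiv (hn : 3 ≤ n) :
    {s : Finset (ECt n a b) // IsMatch (Cends n a b) s} ≃
      {t : Finset (EDt n a b) //
        IsMatch (Dends n (fun _ => a + 1) (fun i => if i = 1 then 2 * b else b)) t} where
  toFun s := ⟨Fset n a b hn s.1, Fset_isMatch n a b hn s.2⟩
  invFun t := ⟨Gset n a b hn t.1, Gset_isMatch n a b hn t.2⟩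
  left_inv s := Subtype.ext (Gset_Fset n a b hn s.1)
  right_inv t := Subtype.ext (Fset_Gset n a b hn t.1)

end Ring

/-- `Z(C_{n,a,b}) = Z(D_n(a+1,…,a+1; 2b, b,…,b))` for `n ≥ 3`, `a ≥ 0`, `b ≥ 1`. -/
theorem hosoya_ring_eq_caterpillar_bond (n a b : ℕ) (hn : 3 ≤ n) (hb : 1 ≤ b) :
    hosoyaM (Cends n a b) =
      hosoyaM (Dends n (fun _ => a + 1) (fun i => if i = 1 then 2 * b else b)) := by
  exact Nat.card_congr (matchEquiv n a b hn)
end
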